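/- If A is a self-adjoint positive semidefinite operator on a finite-dimensional real Hilbert space U and u : [0,T] → U solves u'(t) + A u(t) = f(t) with u(0) = u⁰, then for all t ∈ [0,T], ⟨A u(t), u(t)⟩ ≤ ⟨A u⁰, u⁰⟩ + (1/2) ∫₀ᵗ ‖f(θ)‖² dθ. -/

import Mathlib

open scoped RealInnerProductSpace

/-- Energy estimate for the continuous Cauchy problem u' + A u = f. -/
theorem stmt_0
    {U : Type*} [NormedAddCommGroup U] [InnerProductSpace ℝ U] [FiniteDimensional ℝ U]
    (A : U →ₗ[ℝ] U)
    (hAsym : ∀ x y : U, ⟪A x, y⟫ = ⟪x, A y⟫)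
    (hApos : ∀ x : U, 0 ≤ ⟪A x, x⟫)
    (T : ℝ) (hT : 0 < T)
    (f : ℝ → U) (hf : ContinuousOn f (Set.Icc 0 T))
    (u : ℝ → U) (u0 : U)
    (hu0 : u 0 = u0)
    (hode : ∀ t ∈ Set.Icc (0:ℝ) T, HasDerivAt u (f t - A (u t)) t) :
    ∀ t ∈ Set.Icc (0:ℝ) T,
      ⟪A (u t), u t⟫ ≤ ⟪A u0, u0⟫ + (1/2) * ∫ θ in (0:ℝ)..t, ‖f θ‖^2 := by
  intro t ht
  set Ac := LinearMap.toContinuousLinearMap A with hAc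
  have hAcA : ∀ x : U, Ac x = A x := fun x => rfl
  set h : ℝ → ℝ := fun θ => ‖f θ‖^2 with hh
  have hhcont : ContinuousOn h (Set.Icc 0 T) := (hf.norm.pow 2)
  -- continuity of u on Icc
  have hucont : ContinuousOn u (Set.Icc 0 T) := fun x hx =>
    ((hode x hx).continuousAt).continuousWithinAt
  -- g is the function we show is monotone
  set g : ℝ → ℝ := fun s => (1/2) * (∫ θ in (0:ℝ)..s, h θ) - ⟪A (u s), u s⟫ with hg
  have hE : ContinuousOn (fun s => ⟪A (u s), u s⟫) (Set.Icc 0 T) := by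
    have hAu : ContinuousOn (fun s => A (u s)) (Set.Icc 0 T) := Ac.continuous.comp_continuousOn hucont
    exact hAu.inner hucont
  have hint : ContinuousOn (fun s => ∫ θ in (0:ℝ)..s, h θ) (Set.Icc 0 T) := by
    have : MeasureTheory.IntegrableOn h (Set.Icc 0 T) MeasureTheory.volume :=
      hhcont.integrableOn_compact isCompact_Icc
    have := intervalIntegral.continuousOn_primitive (μ := MeasureTheory.volume) (f := h)
      (a := 0) (b := T) this
    refine this.congr fun x hx => ?_
    rw [intervalIntegral.integral_of_le hx.1]
  have hgcont : ContinuousOn g (Set.Icc 0 T) := ((continuousOn_const.mul hint).sub hE)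
  have hinterior : interior (Set.Icc (0:ℝ) T) = Set.Ioo 0 T := interior_Icc
  have hmono : MonotoneOn g (Set.Icc 0 T) := by
    refine monotoneOn_of_hasDerivWithinAt_nonneg (convex_Icc 0 T) hgcont
      (f' := fun x => (1/2) * h x - (⟪A (u x), f x - A (u x)⟫ + ⟪A (f x - A (u x)), u x⟫))
      ?_ ?_
    · intro x hx
      rw [hinterior] at hx
      have hxIcc : x ∈ Set.Icc (0:ℝ) T := Set.Ioo_subset_Icc_self hx
      have hnhds : Set.Icc (0:ℝ) T ∈ nhds x := Icc_mem_nhds hx.1 hx.2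
      -- derivative of the integral part
      have hii : IntervalIntegrable h MeasureTheory.volume 0 x := by
        apply ContinuousOn.intervalIntegrable
        refine hhcont.mono ?_
        rw [Set.uIcc_of_le hx.1.le]
        exact Set.Icc_subset_Icc le_rfl hx.2.le
      have hca : ContinuousAt h x := hhcont.continuousAt hnhds
      have hd1 : HasDerivAt (fun s => ∫ θ in (0:ℝ)..s, h θ) (h x) x :=
        intervalIntegral.integral_hasDerivAt_right hii
          (ContinuousOn.stronglyMeasurableAtFilter isOpen_Ioo (hhcont.mono Set.Ioo_subset_Icc_self) x hx) hca
      -- derivative of the energy part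
      have hdu : HasDerivAt u (f x - A (u x)) x := hode x hxIcc
      have hdAu : HasDerivAt (fun s => A (u s)) (A (f x - A (u x))) x := by
        exact (Ac.hasFDerivAt.comp_hasDerivAt x hdu)
      have hd2 : HasDerivAt (fun s => ⟪A (u s), u s⟫)
          (⟪A (u x), f x - A (u x)⟫ + ⟪A (f x - A (u x)), u x⟫) x :=
        HasDerivAt.inner ℝ hdAu hdu
      exact ((hd1.const_mul (1/2 : ℝ)).sub hd2).hasDerivWithinAt
    · intro x hx
      rw [hinterior] at hx
      have hsym : ⟪A (f x - A (u x)), u x⟫ = ⟪A (u x), f x - A (u x)⟫ := by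
        rw [hAsym, real_inner_comm]
      rw [hsym]
      have hle : ⟪A (u x), f x⟫ ≤ ‖A (u x)‖ * ‖f x‖ := real_inner_le_norm _ _
      have hexp : ⟪A (u x), f x - A (u x)⟫ = ⟪A (u x), f x⟫ - ‖A (u x)‖^2 := by
        rw [inner_sub_right, real_inner_self_eq_norm_sq]
      have hn : (0:ℝ) ≤ ‖f x‖ := norm_nonneg _
      have hn2 : (0:ℝ) ≤ ‖A (u x)‖ := norm_nonneg _
      simp only [hh, hexp]
      nlinarith [sq_nonneg (‖f x‖ - 2 * ‖A (u x)‖)]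
  have h0 : (0:ℝ) ∈ Set.Icc (0:ℝ) T := ⟨le_rfl, hT.le⟩
  have := hmono h0 ht ht.1
  have hg0 : g 0 = -⟪A u0, u0⟫ := by
    simp [hg, hu0]
  rw [hg0] at this
  simp only [hg] at this
  linarith
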